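/- In the binary-search hypothesis identification problem with N hypotheses, any non-adaptive policy (a fixed sequence of features, chosen before any observations) that identifies every hypothesis with certainty must query at least N−1 features. Consequently the ratio of non-adaptive to adaptive optimal cost is at least (N−1)/log₂(N). -/

import Mathlib

/-- Feature `F_{j,b}` in the binary-search construction with `N = 2^k` hypotheses
(0-indexed `h ∈ {0,...,2^k - 1}`): indicator of membership in the first half of the
`b`-th block of size `2^(k-j+1)` at level `j`. -/
def feat (k j b h : ℕ) : Bool :=
  decide (b * 2 ^ (k - j + 1) ≤ h ∧ h < b * 2 ^ (k - j + 1) + 2 ^ (k - j))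


lemma div_eq_iff' (a b n : ℕ) (h : 0 < n) : a / n = b ↔ b * n ≤ a ∧ a < (b+1) * n := by
  constructor
  · rintro rfl
    refine ⟨Nat.div_mul_le_self a n, ?_⟩
    calc a = n * (a/n) + a % n := (Nat.div_add_mod a n).symm
      _ < n * (a/n) + n := by have := Nat.mod_lt a h; omega
      _ = (a/n + 1) * n := by ring
  · rintro ⟨h1, h2⟩; exact Nat.div_eq_of_lt_le h1 h2

lemma quot_lemma (r q t : ℕ) (h : r < 2^t) : (r + q * 2^t)/2^t = q := by
  rw [Nat.add_mul_div_right _ _ (Nat.two_pow_pos t),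
    Nat.div_eq_of_lt h]; omega

lemma quot_odd (A t : ℕ) : ((2^(t+1) - 1) + A * 2^(t+1)) / 2^t = 2*A + 1 := by
  have hp : 0 < 2^t := Nat.two_pow_pos t
  rw [show (2^(t+1) - 1) + A * 2^(t+1) = (2^t - 1) + (2*A+1) * 2^t by
    have e3 : 2^(t+1) = 2*2^t := by ring
    have e5 : A * 2^(t+1) = 2*(A*2^t) := by ring
    have e6 : (2*A+1)*2^t = 2*(A*2^t) + 2^t := by ring
    omega]
  exact quot_lemma _ _ _ (by omega)

lemma key1 (b e t : ℕ) : b * 2^((e+1)+(t+1)) + (2^(e+(t+1)) - 1)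
    = (2^(t+1) - 1) + (b*2^(e+1) + (2^e - 1)) * 2^(t+1) := by
  have h1 : (1:ℕ) ≤ 2^(e+(t+1)) := Nat.one_le_two_pow
  have h2 : (1:ℕ) ≤ 2^(t+1) := Nat.one_le_two_pow
  have h3 : (1:ℕ) ≤ 2^e := Nat.one_le_two_pow
  zify [h1, h2, h3]
  ring

lemma key2 (b e t : ℕ) : b * 2^((e+1)+(t+1)) + (2^((e+1)+(t+1)) - 1)
    = (2^(t+1) - 1) + (b*2^(e+1) + (2^(e+1) - 1)) * 2^(t+1) := by
  have h1 : (1:ℕ) ≤ 2^((e+1)+(t+1)) := Nat.one_le_two_pow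
  have h2 : (1:ℕ) ≤ 2^(t+1) := Nat.one_le_two_pow
  have h3 : (1:ℕ) ≤ 2^(e+1) := Nat.one_le_two_pow
  zify [h1, h2, h3]
  ring

/-- Division characterization of `feat`: `feat k j b h` holds iff `h / 2^(k-j) = 2b`. -/
lemma feat_div (k j b h : ℕ) :
    feat k j b h = decide (h / 2 ^ (k - j) = 2 * b) := by
  rw [feat, decide_eq_decide]
  set m := k - j with hm
  rw [div_eq_iff' _ _ _ (Nat.two_pow_pos m)]
  have e1 : b * 2^(m+1) = 2*(b*2^m) := by ring
  have e2 : (2*b+1)*2^m = 2*(b*2^m) + 2^m := by ring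
  have e3 : (2*b)*2^m = 2*(b*2^m) := by ring
  omega

/-- If feature `(j,b)` is missing, the two witness hypotheses
`b·2^{m+1} + 2^m - 1` and `b·2^{m+1} + 2^{m+1} - 1` (with `m = k-j`)
agree on every other feature. -/
lemma agree (k j b j' b' : ℕ) (hj1 : 1 ≤ j) (hjk : j ≤ k)
    (hj1' : 1 ≤ j') (hjk' : j' ≤ k) (hne : (j', b') ≠ (j, b)) :
    feat k j' b' (b * 2^(k-j+1) + (2^(k-j) - 1)) =
    feat k j' b' (b * 2^(k-j+1) + (2^(k-j+1) - 1)) := by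
  set m := k - j with hm
  set m' := k - j' with hm'
  have hp : 0 < 2^m := Nat.two_pow_pos m
  have hp1 : 0 < 2^(m+1) := Nat.two_pow_pos _
  rw [feat_div, feat_div, ← hm']
  have e1 : b * 2^(m+1) = 2*(b*2^m) := by ring
  have e3 : 2^(m+1) = 2*2^m := by ring
  rcases lt_trichotomy m' m with hlt | heq | hgt
  · -- j' > j : both quotients odd, 2*b' even, so both features are false
    obtain ⟨e, he⟩ : ∃ e, m = e + (m' + 1) := ⟨m - m' - 1, by omega⟩
    have o1 : (b * 2^(m+1) + (2^m - 1)) / 2^m'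
        = 2*(b*2^(e+1) + (2^e - 1)) + 1 := by
      rw [show m + 1 = (e+1)+(m'+1) by omega, show m = e+(m'+1) from he, key1]
      exact quot_odd _ _
    have o2 : (b * 2^(m+1) + (2^(m+1) - 1)) / 2^m'
        = 2*(b*2^(e+1) + (2^(e+1) - 1)) + 1 := by
      rw [show m + 1 = (e+1)+(m'+1) by omega, key2]
      exact quot_odd _ _
    rw [o1, o2]
    simp only [decide_eq_decide]
    omega
  · -- j' = j, so b' ≠ b : quotients are 2b and 2b+1, both ≠ 2b'
    have hj : j' = j := by omega
    have hb : b' ≠ b := fun h => hne (by rw [hj, h])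
    have q1 : (b * 2^(m+1) + (2^m - 1)) / 2^m = 2*b := by
      rw [show b * 2^(m+1) + (2^m - 1) = (2^m - 1) + (2*b) * 2^m by
        have e4 : (2*b)*2^m = 2*(b*2^m) := by ring
        omega]
      exact quot_lemma _ _ _ (by omega)
    have q2 : (b * 2^(m+1) + (2^(m+1) - 1)) / 2^m = 2*b + 1 := by
      rw [show b * 2^(m+1) + (2^(m+1) - 1) = (2^m - 1) + (2*b+1) * 2^m by
        have e4 : (2*b+1)*2^m = 2*(b*2^m) + 2^m := by ring
        omega]
      exact quot_lemma _ _ _ (by omega)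
    rw [heq, q1, q2]
    simp only [decide_eq_decide]
    omega
  · -- j' < j : quotients by 2^(m+1) are both b, so the features agree
    have q1' : (b * 2^(m+1) + (2^m - 1)) / 2^(m+1) = b := by
      rw [show b * 2^(m+1) + (2^m - 1) = (2^m - 1) + b * 2^(m+1) by omega]
      exact quot_lemma _ _ _ (by omega)
    have q2' : (b * 2^(m+1) + (2^(m+1) - 1)) / 2^(m+1) = b := by
      rw [show b * 2^(m+1) + (2^(m+1) - 1) = (2^(m+1) - 1) + b * 2^(m+1) by omega]
      exact quot_lemma _ _ _ (by omega)
    have f : 2^m' = 2^(m+1) * 2^(m' - m - 1) := by rw [← pow_add]; congr 1; omega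
    rw [f, ← Nat.div_div_eq_div_mul, ← Nat.div_div_eq_div_mul, q1', q2']

lemma sum_range_two_pow (n : ℕ) : ∑ i ∈ Finset.range n, 2^i = 2^n - 1 := by
  induction n with
  | zero => simp
  | succ n ih =>
    rw [Finset.sum_range_succ, ih, pow_succ]
    have : 1 ≤ 2^n := Nat.one_le_two_pow
    omega

/-- Any non-adaptive policy, i.e. a fixed set `S` of features (indexed by level/block
pairs `(j,b)` with `1 ≤ j ≤ k`, `b < 2^(j-1)`) chosen before any observations, that
identifies every hypothesis with certainty (the map from hypotheses to feature vectors
restricted to `S` is injective) must contain at least `N - 1` features, where `N = 2^k`.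
Consequently, the ratio of the non-adaptive cost to the adaptive optimal cost
`log₂ N = k` is at least `(N - 1) / log₂ N`. -/
theorem nonadaptive_needs_all_features (k : ℕ) (hk : 1 ≤ k) (S : Finset (ℕ × ℕ))
    (hS : ∀ q ∈ S, 1 ≤ q.1 ∧ q.1 ≤ k ∧ q.2 < 2 ^ (q.1 - 1))
    (hinj : ∀ h1 < 2 ^ k, ∀ h2 < 2 ^ k,
      (∀ q ∈ S, feat k q.1 q.2 h1 = feat k q.1 q.2 h2) → h1 = h2) :
    2 ^ k - 1 ≤ S.card ∧
      ((2 ^ k - 1 : ℝ)) / (k : ℝ) ≤ (S.card : ℝ) / (k : ℝ) := by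
  have hT : ∀ j b, 1 ≤ j → j ≤ k → b < 2^(j-1) → (j, b) ∈ S := by
    intro j b hj1 hjk hb
    by_contra hmem
    set m := k - j with hm
    have hp : 0 < 2^m := Nat.two_pow_pos m
    have hp1 : 0 < 2^(m+1) := Nat.two_pow_pos _
    have hbound : (b+1) * 2^(m+1) ≤ 2^k := by
      calc (b+1) * 2^(m+1) ≤ 2^(j-1) * 2^(m+1) := Nat.mul_le_mul_right _ (by omega)
        _ = 2^k := by rw [← pow_add]; congr 1; omega
    have e4 : (b+1) * 2^(m+1) = b * 2^(m+1) + 2^(m+1) := by ring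
    have h1lt : b * 2^(m+1) + (2^m - 1) < 2^k := by omega
    have h2lt : b * 2^(m+1) + (2^(m+1) - 1) < 2^k := by omega
    have heq := hinj _ h1lt _ h2lt ?_
    · have e3 : 2^(m+1) = 2*2^m := by ring
      omega
    · rintro ⟨j', b'⟩ hq
      obtain ⟨hj1', hjk', _⟩ := hS _ hq
      have hne : (j', b') ≠ (j, b) := fun hpair => hmem (hpair ▸ hq)
      exact agree k j b j' b' hj1 hjk hj1' hjk' hne
  set T : Finset (ℕ × ℕ) :=
    (Finset.Icc 1 k).biUnion (fun j => (Finset.range (2^(j-1))).image fun b => (j, b))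
    with hTdef
  have hsub : T ⊆ S := by
    intro q hq
    simp only [hTdef, Finset.mem_biUnion, Finset.mem_Icc, Finset.mem_image,
      Finset.mem_range] at hq
    obtain ⟨j, ⟨hj1, hjk⟩, b, hb, rfl⟩ := hq
    exact hT j b hj1 hjk hb
  have hcardT : T.card = 2^k - 1 := by
    rw [hTdef, Finset.card_biUnion]
    · have hc : ∀ j ∈ Finset.Icc 1 k,
          ((Finset.range (2^(j-1))).image fun b => (j, b)).card = 2^(j-1) := by
        intro j _
        rw [Finset.card_image_of_injective _ (fun a b hab => by simpa using hab),
          Finset.card_range]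
      rw [Finset.sum_congr rfl hc, ← Finset.Ico_add_one_right_eq_Icc, Finset.sum_Ico_eq_sum_range]
      simp only [Nat.add_sub_cancel, Nat.add_sub_cancel_left]
      exact sum_range_two_pow k
    · intro j1 _ j2 _ hne
      rw [Function.onFun, Finset.disjoint_left]
      intro a ha hb
      simp only [Finset.mem_image, Finset.mem_range] at ha hb
      obtain ⟨b1, _, rfl⟩ := ha
      obtain ⟨b2, _, h2⟩ := hb
      exact hne (congrArg Prod.fst h2).symm
  have hcard : 2^k - 1 ≤ S.card := hcardT ▸ Finset.card_le_card hsub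
  refine ⟨hcard, ?_⟩
  have hk' : (0:ℝ) < (k:ℝ) := by exact_mod_cast hk
  have h2 : (1:ℕ) ≤ 2^k := Nat.one_le_two_pow
  have hnum : ((2:ℝ)^k - 1) ≤ (S.card : ℝ) := by
    calc ((2:ℝ)^k - 1) = ((2^k - 1 : ℕ) : ℝ) := by push_cast [h2]; ring
      _ ≤ _ := Nat.cast_le.mpr hcard
  exact (div_le_div_iff_of_pos_right hk').mpr hnum
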